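/- Let (γ_n)_{n∈ℕ} be independent real random variables on a probability space (Ω,𝓕,ℙ) with γ_n having (possibly degenerate) Gaussian law of mean μ_n and standard deviation σ_n, and let q ∈ ℝ. Suppose that either (a) there exists c > 0 such that limsup_{N→∞} (1/N) · #{n ≤ N : max(|μ_n|, σ_n) ≥ c(1+n)^q} > 0, or (b) ∑_{n=0}^∞ (1+n)^{−2q−1} μ_n² = ∞. Then for ℙ-almost all ω ∈ Ω one has ∑_{n=0}^∞ (1+n)^{−2q−1} γ_n(ω)² = ∞ (i.e. the sequence (γ_n(ω))_{n∈ℕ} does not lie in the weighted ℓ² space h^{−q−1/2}(ℕ)). -/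

import Mathlib

open MeasureTheory ProbabilityTheory Filter
open scoped NNReal ENNReal Topology

lemma exp_neg_le_aux {z : ℝ} (h0 : 0 ≤ z) (h1 : z ≤ 1) :
    Real.exp (-z) ≤ 1 - (1 - Real.exp (-1)) * z := by
  have h := convexOn_exp.2 (Set.mem_univ (-1)) (Set.mem_univ 0)
    (show (0:ℝ) ≤ z from h0) (show (0:ℝ) ≤ 1 - z by linarith)
    (show z + (1 - z) = 1 by ring)
  simp only [smul_eq_mul, mul_neg, mul_one, mul_zero, add_zero, Real.exp_zero] at h
  nlinarith [h]

lemma core_divergence {Ω : Type*} [MeasurableSpace Ω] (P : Measure Ω) [IsProbabilityMeasure P]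
    (Z : ℕ → Ω → ℝ) (hZmeas : ∀ n, Measurable (Z n))
    (hZindep : iIndepFun Z P)
    (hZ0 : ∀ n ω, 0 ≤ Z n ω) (hZ1 : ∀ n ω, Z n ω ≤ 1)
    (hdiv : ¬ Summable (fun n => ∫ ω, Z n ω ∂P)) :
    ∀ᵐ ω ∂P, ¬ Summable (fun n => Z n ω) := by
  set c : ℝ := 1 - Real.exp (-1) with hc
  have hcpos : 0 < c := by
    have : Real.exp (-1) < 1 := Real.exp_lt_one_iff.mpr (by norm_num)
    rw [hc]; linarith
  set g : ℕ → Ω → ℝ := fun n ω => Real.exp (-(Z n ω)) with hg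
  have hgmeas : ∀ n, Measurable (g n) := fun n => (Real.measurable_exp).comp (hZmeas n).neg
  have hg0 : ∀ n ω, 0 < g n ω := fun n ω => Real.exp_pos _
  have hg1 : ∀ n ω, g n ω ≤ 1 := fun n ω => Real.exp_le_one_iff.mpr (by linarith [hZ0 n ω])
  have hgindep : iIndepFun g P :=
    hZindep.comp (fun _ x => Real.exp (-x)) (fun _ => Real.measurable_exp.comp measurable_neg)
  set W : ℕ → Ω → ℝ := fun N ω => ∏ n ∈ Finset.range N, g n ω with hW
  have hWexp : ∀ N ω, W N ω = Real.exp (-(∑ n ∈ Finset.range N, Z n ω)) := by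
    intro N ω
    rw [hW]
    simp only [hg, ← Real.exp_sum, Finset.sum_neg_distrib]
  have hWmeas : ∀ N, Measurable (W N) :=
    fun N => Finset.measurable_prod _ (fun i _ => hgmeas i)
  have hW0 : ∀ N ω, 0 ≤ W N ω := fun N ω => Finset.prod_nonneg fun i _ => (hg0 i ω).le
  have hW1 : ∀ N ω, W N ω ≤ 1 := fun N ω =>
    Finset.prod_le_one (fun i _ => (hg0 i ω).le) (fun i _ => hg1 i ω)
  have hint : ∀ (f : Ω → ℝ), Measurable f → (∀ ω, 0 ≤ f ω) → (∀ ω, f ω ≤ 1) →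
      Integrable f P := by
    intro f hm h0 h1
    refine (integrable_const (1:ℝ)).mono' hm.aestronglyMeasurable ?_
    exact ae_of_all _ fun ω => by rw [Real.norm_eq_abs, abs_of_nonneg (h0 ω)]; exact h1 ω
  have hWint : ∀ N, Integrable (W N) P := fun N => hint _ (hWmeas N) (hW0 N) (hW1 N)
  have hgint : ∀ n, Integrable (g n) P := fun n => hint _ (hgmeas n) (fun ω => (hg0 n ω).le) (hg1 n)
  have hZint : ∀ n, Integrable (Z n) P := fun n => hint _ (hZmeas n) (hZ0 n) (hZ1 n)
  set E : ℕ → ℝ := fun n => ∫ ω, Z n ω ∂P with hE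
  set I : ℕ → ℝ := fun N => ∫ ω, W N ω ∂P with hI
  have hIprod : ∀ N, I N = ∏ n ∈ Finset.range N, ∫ ω, g n ω ∂P := by
    intro N
    induction N with
    | zero => simp [hI, hW]
    | succ N ih =>
      rw [Finset.prod_range_succ, ← ih]
      have hind : IndepFun (∏ n ∈ Finset.range N, g n) (g N) P :=
        hgindep.indepFun_prod_range_succ hgmeas N
      have hprodint : Integrable (∏ n ∈ Finset.range N, g n) P := by
        have : (∏ n ∈ Finset.range N, g n) = W N := by
          funext ω; rw [hW]; simp [Finset.prod_apply]
        rw [this]; exact hWint N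
      have heq : W (N+1) = (∏ n ∈ Finset.range N, g n) * g N := by
        funext ω
        simp [hW, Finset.prod_apply, Finset.prod_range_succ]
      have heq2 : integral P (∏ n ∈ Finset.range N, g n) = I N := by
        rw [hI]
        congr 1
        funext ω; simp [hW, Finset.prod_apply]
      calc I (N+1) = integral P ((∏ n ∈ Finset.range N, g n) * g N) := by
            rw [hI]; exact congrArg (integral P) heq
        _ = integral P (∏ n ∈ Finset.range N, g n) * integral P (g N) :=
            hind.integral_mul_eq_mul_integral hprodint.aestronglyMeasurable (hgint N).aestronglyMeasurable
        _ = I N * ∫ ω, g N ω ∂P := by rw [heq2]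
  have hgbound : ∀ n, ∫ ω, g n ω ∂P ≤ Real.exp (-(c * E n)) := by
    intro n
    have h1 : ∫ ω, g n ω ∂P ≤ ∫ ω, (1 - c * Z n ω) ∂P := by
      refine integral_mono (hgint n) ((integrable_const 1).sub ((hZint n).const_mul c)) ?_
      intro ω
      exact exp_neg_le_aux (hZ0 n ω) (hZ1 n ω)
    have h2 : ∫ ω, (1 - c * Z n ω) ∂P = 1 - c * E n := by
      rw [integral_sub (integrable_const 1) ((hZint n).const_mul c), integral_const,
        integral_const_mul]
      simp [hE]
    have h3 : 1 - c * E n ≤ Real.exp (-(c * E n)) := by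
      have := Real.add_one_le_exp (-(c * E n))
      linarith
    linarith [h1, h2 ▸ h1]
  have hE0 : ∀ n, 0 ≤ E n := fun n => integral_nonneg (fun ω => hZ0 n ω)
  have hIbound : ∀ N, I N ≤ Real.exp (-(c * ∑ n ∈ Finset.range N, E n)) := by
    intro N
    rw [hIprod N]
    calc ∏ n ∈ Finset.range N, ∫ ω, g n ω ∂P
        ≤ ∏ n ∈ Finset.range N, Real.exp (-(c * E n)) := by
          refine Finset.prod_le_prod (fun i _ => integral_nonneg fun ω => (hg0 i ω).le)
            (fun i _ => hgbound i)
      _ = Real.exp (-(c * ∑ n ∈ Finset.range N, E n)) := by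
          rw [← Real.exp_sum]
          congr 1
          rw [Finset.mul_sum]
          simp
  have hStend : Tendsto (fun N => ∑ n ∈ Finset.range N, E n) atTop atTop :=
    (not_summable_iff_tendsto_nat_atTop_of_nonneg hE0).mp hdiv
  have hexp0 : Tendsto (fun N => Real.exp (-(c * ∑ n ∈ Finset.range N, E n))) atTop (𝓝 0) := by
    refine Real.tendsto_exp_atBot.comp ?_
    exact (tendsto_neg_atTop_atBot).comp (hStend.const_mul_atTop hcpos)
  have hI0 : Tendsto I atTop (𝓝 0) :=
    squeeze_zero (fun N => integral_nonneg (hW0 N)) hIbound hexp0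
  set A : ℕ → Set Ω := fun k => ⋂ N, {ω | ∑ n ∈ Finset.range N, Z n ω ≤ (k:ℝ)} with hA
  have hAmeas : ∀ k, MeasurableSet (A k) := by
    intro k
    exact MeasurableSet.iInter fun N =>
      measurableSet_le (Finset.measurable_sum _ fun i _ => hZmeas i) measurable_const
  have hAnull : ∀ k, P (A k) = 0 := by
    intro k
    have key : ∀ N, Real.exp (-(k:ℝ)) * (P (A k)).toReal ≤ I N := by
      intro N
      have h1 : Real.exp (-(k:ℝ)) * (P (A k)).toReal
          = ∫ ω in A k, Real.exp (-(k:ℝ)) ∂P := by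
        rw [setIntegral_const]; rw [smul_eq_mul]; rw [mul_comm]; rfl
      have h2 : ∫ ω in A k, Real.exp (-(k:ℝ)) ∂P ≤ ∫ ω in A k, W N ω ∂P := by
        refine setIntegral_mono_on (integrableOn_const (measure_ne_top _ _))
          ((hWint N).integrableOn) (hAmeas k) ?_
        intro ω hω
        rw [hWexp]
        refine Real.exp_le_exp.mpr ?_
        simp only [neg_le_neg_iff]
        exact (Set.mem_iInter.mp hω N)
      have h3 : ∫ ω in A k, W N ω ∂P ≤ I N :=
        setIntegral_le_integral (hWint N) (ae_of_all _ (hW0 N))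
      linarith
    have hle : Real.exp (-(k:ℝ)) * (P (A k)).toReal ≤ 0 :=
      ge_of_tendsto hI0 (Filter.Eventually.of_forall key)
    have hpos := Real.exp_pos (-(k:ℝ))
    have htoReal : (P (A k)).toReal = 0 := by
      nlinarith [ENNReal.toReal_nonneg (a := P (A k))]
    exact (ENNReal.toReal_eq_zero_iff _).mp htoReal |>.resolve_right (measure_ne_top P _)
  have hsub : {ω | Summable (fun n => Z n ω)} ⊆ ⋃ k : ℕ, A k := by
    intro ω hω
    simp only [Set.mem_iUnion, hA, Set.mem_iInter, Set.mem_setOf_eq]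
    refine ⟨⌈∑' n, Z n ω⌉₊, fun N => ?_⟩
    exact le_trans (Summable.sum_le_tsum (Finset.range N) (fun i _ => hZ0 i ω) hω) (Nat.le_ceil _)
  have hnull : P {ω | Summable (fun n => Z n ω)} = 0 :=
    measure_mono_null hsub (measure_iUnion_null hAnull)
  rw [ae_iff]
  simpa [not_not] using hnull

lemma gaussian_symm_map (μ : ℝ) (v : ℝ≥0) :
    (gaussianReal μ v).map (fun x => 2*μ - x) = gaussianReal μ v := by
  have h1 := gaussianReal_map_const_mul (μ := μ) (v := v) (-1)
  have h3 : ((gaussianReal μ v).map (fun x => (-1:ℝ) * x)).map (· + 2*μ)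
      = (gaussianReal μ v).map ((· + 2*μ) ∘ (fun x => (-1:ℝ) * x)) :=
    Measure.map_map (measurable_id.add_const _) (measurable_const_mul _)
  have h4 : ((· + 2*μ) ∘ (fun x => (-1:ℝ) * x)) = (fun x => 2*μ - x) := by
    funext x; simp; ring
  rw [h4] at h3
  rw [← h3, h1, gaussianReal_map_add_const]
  congr 1
  · ring
  · ext
    simp [NNReal.coe_mul]

lemma gaussian_Ici_eq_Iic (μ : ℝ) (v : ℝ≥0) :
    gaussianReal μ v (Set.Ici μ) = gaussianReal μ v (Set.Iic μ) := by
  conv_rhs => rw [← gaussian_symm_map μ v]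
  rw [Measure.map_apply (show Measurable fun x : ℝ => 2*μ - x by fun_prop) measurableSet_Iic]
  congr 1
  ext x
  simp only [Set.mem_preimage, Set.mem_Iic, Set.mem_Ici]
  constructor <;> intro h <;> linarith

lemma gaussian_half_Ici (μ : ℝ) (v : ℝ≥0) :
    (1:ℝ)/2 ≤ ((gaussianReal μ v) (Set.Ici μ)).toReal := by
  have h1 : (1:ℝ≥0∞) ≤ (gaussianReal μ v) (Set.Ici μ) + (gaussianReal μ v) (Set.Iic μ) := by
    calc (1:ℝ≥0∞) = (gaussianReal μ v) Set.univ := (measure_univ).symm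
      _ ≤ (gaussianReal μ v) (Set.Ici μ ∪ Set.Iic μ) := measure_mono (fun x _ => by
          rcases le_total μ x with h | h
          · exact Or.inl h
          · exact Or.inr h)
      _ ≤ (gaussianReal μ v) (Set.Ici μ) + (gaussianReal μ v) (Set.Iic μ) := measure_union_le _ _
  have heq := gaussian_Ici_eq_Iic μ v
  have h2 : (1:ℝ≥0∞) ≤ 2 * (gaussianReal μ v) (Set.Ici μ) := by
    rw [two_mul]
    calc (1:ℝ≥0∞) ≤ _ := h1
      _ = _ := by rw [heq]
  have h3 : (1:ℝ) ≤ 2 * ((gaussianReal μ v) (Set.Ici μ)).toReal := by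
    have := ENNReal.toReal_mono (by finiteness) h2
    rw [ENNReal.toReal_mul] at this
    simpa using this
  linarith

lemma gaussian_half_Iic (μ : ℝ) (v : ℝ≥0) :
    (1:ℝ)/2 ≤ ((gaussianReal μ v) (Set.Iic μ)).toReal := by
  rw [← gaussian_Ici_eq_Iic]
  exact gaussian_half_Ici μ v

lemma gaussian_abs_half (μ : ℝ) (v : ℝ≥0) :
    (1:ℝ)/2 ≤ ((gaussianReal μ v) {x | |μ| ≤ |x|}).toReal := by
  rcases le_total 0 μ with hμ | hμ
  · refine le_trans (gaussian_half_Ici μ v) (ENNReal.toReal_mono (by finiteness) ?_)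
    refine measure_mono fun x hx => ?_
    simp only [Set.mem_Ici] at hx
    simp only [Set.mem_setOf_eq, abs_of_nonneg hμ]
    exact le_trans hx (le_abs_self x)
  · refine le_trans (gaussian_half_Iic μ v) (ENNReal.toReal_mono (by finiteness) ?_)
    refine measure_mono fun x hx => ?_
    simp only [Set.mem_Iic] at hx
    simp only [Set.mem_setOf_eq, abs_of_nonpos hμ]
    calc -μ ≤ -x := by linarith
      _ ≤ |x| := neg_le_abs x

lemma gaussian_tail_pos : 0 < ((gaussianReal 0 1) (Set.Ici (2:ℝ))).toReal := by
  refine ENNReal.toReal_pos ?_ (measure_ne_top _ _)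
  intro h0
  rw [gaussianReal_apply 0 one_ne_zero] at h0
  have h := (lintegral_eq_zero_iff (measurable_gaussianPDF 0 1)).mp h0
  have huniv : {x : ℝ | ¬ gaussianPDF 0 1 x = 0} = Set.univ := by
    refine Set.eq_univ_of_forall fun x => ?_
    exact (gaussianPDF_pos 0 one_ne_zero x).ne'
  rw [Filter.EventuallyEq, ae_iff] at h
  simp only [Pi.zero_apply] at h
  rw [huniv, Measure.restrict_apply_univ] at h
  rw [Real.volume_Ici] at h
  exact ENNReal.top_ne_zero h

lemma gaussian_tail_eq (μ : ℝ) (σ : ℝ≥0) (hσ : σ ≠ 0) :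
    gaussianReal μ (σ^2) (Set.Ici (μ + 2*σ)) = gaussianReal 0 1 (Set.Ici (2:ℝ)) := by
  have hσpos : (0:ℝ) < σ := by positivity
  have h1 : (gaussianReal 0 1).map (fun y => (σ:ℝ) * y)
      = gaussianReal 0 (σ^2) := by
    rw [gaussianReal_map_const_mul (σ:ℝ)]
    congr 1
    · ring
    · ext; push_cast; ring
  have h2 : ((gaussianReal 0 1).map (fun y => (σ:ℝ) * y)).map (· + μ)
      = (gaussianReal 0 1).map ((· + μ) ∘ (fun y => (σ:ℝ) * y)) :=
    Measure.map_map (measurable_id.add_const _) (measurable_const_mul _)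
  have h3 : gaussianReal μ (σ^2) = (gaussianReal 0 1).map (fun y => (σ:ℝ) * y + μ) := by
    rw [show (fun y => (σ:ℝ) * y + μ) = ((· + μ) ∘ (fun y => (σ:ℝ) * y)) from rfl, ← h2, h1,
      gaussianReal_map_add_const]
    norm_num
  rw [h3, Measure.map_apply ((measurable_const_mul _).add_const _) measurableSet_Ici]
  congr 1
  ext y
  simp only [Set.mem_preimage, Set.mem_Ici]
  constructor
  · intro h; nlinarith
  · intro h; nlinarith

lemma limsup_density_zero_of_summable {cond : ℕ → Prop} {b : ℕ → ℝ}
    (hb0 : ∀ n, 0 ≤ b n) (hbc : ∀ n, cond n → (1:ℝ)/(1+n) ≤ b n)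
    (hs : Summable b) :
    Filter.limsup (fun N : ℕ =>
      (Nat.card {n : ℕ | n ≤ N ∧ cond n} : ℝ) / N) atTop ≤ 0 := by
  classical
  set u : ℕ → ℝ := fun N => (Nat.card {n : ℕ | n ≤ N ∧ cond n} : ℝ) / N with hu
  have hu0 : ∀ N, 0 ≤ u N := by
    intro N; rw [hu]; positivity
  have hcount : ∀ N : ℕ, (Nat.card {n : ℕ | n ≤ N ∧ cond n})
      = ((Finset.range (N+1)).filter cond).card := by
    intro N
    rw [Nat.card_coe_set_eq]
    rw [show {n : ℕ | n ≤ N ∧ cond n} = ↑((Finset.range (N+1)).filter cond) by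
      ext n; simp [Finset.mem_filter, Nat.lt_succ_iff, and_comm]]
    exact Set.ncard_coe_finset _
  refine le_of_forall_pos_le_add ?_
  intro ε hε
  rw [zero_add]
  have htail : Tendsto (fun M => ∑' n, b (n + M)) atTop (𝓝 0) := tendsto_sum_nat_add b
  obtain ⟨M, hM⟩ := (htail.eventually (eventually_le_nhds (show (0:ℝ) < ε/4 by positivity))).exists
  set T : ℝ := ∑' n, b (n + M) with hT
  have hT0 : 0 ≤ T := tsum_nonneg fun n => hb0 _
  have key : ∀ N : ℕ, M ≤ N → (Nat.card {n : ℕ | n ≤ N ∧ cond n} : ℝ) ≤ M + (1+N) * T := by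
    intro N hMN
    rw [hcount N]
    have hcard1 : (((Finset.Ico 0 M).filter cond).card : ℝ) ≤ M := by
      have := Finset.card_filter_le (Finset.Ico 0 M) cond
      have h2 : (Finset.Ico 0 M).card = M := by simp
      exact_mod_cast this.trans_eq h2
    have hsum_le : ∑ n ∈ Finset.Ico M (N+1), b n ≤ T := by
      rw [Finset.sum_Ico_eq_sum_range, hT]
      refine le_trans (le_of_eq ?_) (Summable.sum_le_tsum (Finset.range (N+1-M)) (fun i _ => hb0 _)
        ((summable_nat_add_iff M).mpr hs))
      refine Finset.sum_congr rfl fun i _ => ?_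
      rw [add_comm]
    have hcard2 : (((Finset.Ico M (N+1)).filter cond).card : ℝ) ≤ (1+N) * T := by
      have hstep : (((Finset.Ico M (N+1)).filter cond).card : ℝ) * (1/(1+N))
          ≤ ∑ n ∈ (Finset.Ico M (N+1)).filter cond, b n := by
        have h := Finset.card_nsmul_le_sum ((Finset.Ico M (N+1)).filter cond)
          b (1/(1+(N:ℝ))) ?_
        · simpa [nsmul_eq_mul] using h
        · intro x hx
          simp only [Finset.mem_filter, Finset.mem_Ico] at hx
          have hxN : (x:ℝ) ≤ N := by exact_mod_cast Nat.lt_succ_iff.mp hx.1.2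
          refine le_trans ?_ (hbc x hx.2)
          apply div_le_div_of_nonneg_left
          · norm_num
          · positivity
          · linarith
      have hfilter_le : ∑ n ∈ (Finset.Ico M (N+1)).filter cond, b n
          ≤ ∑ n ∈ Finset.Ico M (N+1), b n :=
        Finset.sum_le_sum_of_subset_of_nonneg (Finset.filter_subset _ _)
          (fun i _ _ => hb0 i)
      have h1N : (0:ℝ) < 1 + N := by positivity
      calc (((Finset.Ico M (N+1)).filter cond).card : ℝ)
          = (((Finset.Ico M (N+1)).filter cond).card : ℝ) * (1/(1+N)) * (1+N) := by
            field_simp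
        _ ≤ T * (1+N) :=
            mul_le_mul_of_nonneg_right (hstep.trans (hfilter_le.trans hsum_le)) h1N.le
        _ = (1+N) * T := by ring
    have hsplit : Finset.range (N+1) = Finset.Ico 0 M ∪ Finset.Ico M (N+1) := by
      rw [Finset.Ico_union_Ico_eq_Ico (Nat.zero_le M) (by omega), Finset.range_eq_Ico]
    calc ((((Finset.range (N+1)).filter cond).card : ℕ) : ℝ)
        ≤ (((Finset.Ico 0 M).filter cond).card : ℝ)
          + (((Finset.Ico M (N+1)).filter cond).card : ℝ) := by
          rw [hsplit, Finset.filter_union]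
          exact_mod_cast Finset.card_union_le _ _
      _ ≤ M + (1+N) * T := add_le_add hcard1 hcard2
  have hev : ∀ᶠ N : ℕ in atTop, u N ≤ ε := by
    have e1 : ∀ᶠ N : ℕ in atTop, (M:ℝ)/N ≤ ε/2 :=
      (tendsto_const_div_atTop_nhds_zero_nat (M:ℝ)).eventually
        (eventually_le_nhds (show (0:ℝ) < ε/2 by positivity))
    filter_upwards [e1, eventually_ge_atTop (max M 1)] with N h1 h2
    have hM' : M ≤ N := le_trans (le_max_left _ _) h2
    have hN1 : 1 ≤ N := le_trans (le_max_right _ _) h2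
    have hNpos : (0:ℝ) < N := by exact_mod_cast hN1
    have hkey := key N hM'
    have hdiv : u N ≤ ((M:ℝ) + (1+N) * T) / N := by
      show (Nat.card {n : ℕ | n ≤ N ∧ cond n} : ℝ) / N ≤ _
      gcongr
    have hsplit2 : ((M:ℝ) + (1+N) * T) / N = (M:ℝ)/N + (1+N)/N * T := by ring
    have hfrac : (1+(N:ℝ))/N ≤ 2 := by
      rw [div_le_iff₀ hNpos]
      have : (1:ℝ) ≤ N := by exact_mod_cast hN1
      linarith
    have h2T : (1+(N:ℝ))/N * T ≤ 2 * T := mul_le_mul_of_nonneg_right hfrac hT0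
    rw [hsplit2] at hdiv
    linarith [hM]
  exact limsup_le_of_le (isCoboundedUnder_le_of_le atTop (fun N => hu0 N)) hev

lemma gaussian_max_bound (μ : ℝ) (σ : ℝ≥0) :
    min ((gaussianReal 0 1 (Set.Ici (2:ℝ))).toReal) (1/2)
      ≤ ((gaussianReal μ (σ^2)) {x | max |μ| (σ:ℝ) ≤ |x|}).toReal := by
  by_cases hσ : σ = 0
  · subst hσ
    have h0 : ((0:ℝ≥0)^2) = 0 := by norm_num
    rw [h0, gaussianReal_zero_var]
    have hmem : μ ∈ {x : ℝ | max |μ| ((0:ℝ≥0):ℝ) ≤ |x|} := by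
      simp [Set.mem_setOf_eq]
    have hS : MeasurableSet {x : ℝ | max |μ| ((0:ℝ≥0):ℝ) ≤ |x|} :=
      measurableSet_le measurable_const measurable_id.abs
    rw [Measure.dirac_apply' _ hS, Set.indicator_of_mem hmem]
    simp only [Pi.one_apply, ENNReal.toReal_one]
    calc min ((gaussianReal 0 1 (Set.Ici (2:ℝ))).toReal) (1/2) ≤ 1/2 := min_le_right _ _
      _ ≤ 1 := by norm_num
  · rcases le_total (σ:ℝ) |μ| with hle | hle
    · rw [max_eq_left hle]
      refine le_trans (min_le_right _ _) (le_trans (gaussian_abs_half μ (σ^2)) ?_)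
      exact le_refl _
    · rw [max_eq_right hle]
      refine le_trans (min_le_left _ _) ?_
      rw [← gaussian_tail_eq μ σ hσ]
      refine ENNReal.toReal_mono (measure_ne_top _ _) (measure_mono ?_)
      intro x hx
      simp only [Set.mem_Ici] at hx
      simp only [Set.mem_setOf_eq]
      have hμσ : -(σ:ℝ) ≤ μ := neg_le_of_abs_le hle
      calc (σ:ℝ) ≤ μ + 2*σ := by linarith
        _ ≤ x := hx
        _ ≤ |x| := le_abs_self x
  
lemma integral_min_bound (G : Measure ℝ) [IsProbabilityMeasure G] {w t : ℝ}
    (hw : 0 ≤ w) (ht : 0 ≤ t) :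
    min (w * t^2) 1 * (G {x | t ≤ |x|}).toReal ≤ ∫ x, min (w * x^2) 1 ∂G := by
  have hS : MeasurableSet {x : ℝ | t ≤ |x|} :=
    measurableSet_le measurable_const measurable_id.abs
  have hφm : Measurable fun x : ℝ => min (w * x^2) 1 :=
    ((measurable_id.pow_const 2).const_mul w).min measurable_const
  have hφ0 : ∀ x : ℝ, 0 ≤ min (w * x^2) 1 := fun x => le_min (by positivity) zero_le_one
  have hφ1 : ∀ x : ℝ, min (w * x^2) 1 ≤ 1 := fun x => min_le_right _ _
  have hφint : Integrable (fun x : ℝ => min (w * x^2) 1) G := by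
    refine (integrable_const (1:ℝ)).mono' hφm.aestronglyMeasurable ?_
    exact ae_of_all _ fun x => by
      rw [Real.norm_eq_abs, abs_of_nonneg (hφ0 x)]; exact hφ1 x
  calc min (w * t^2) 1 * (G {x | t ≤ |x|}).toReal
      = ∫ _ in {x : ℝ | t ≤ |x|}, min (w * t^2) 1 ∂G := by
        rw [setIntegral_const, smul_eq_mul, mul_comm]; rfl
    _ ≤ ∫ x in {x : ℝ | t ≤ |x|}, min (w * x^2) 1 ∂G := by
        refine setIntegral_mono_on (integrableOn_const (measure_ne_top _ _))
          (hφint.integrableOn) hS ?_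
        intro x hx
        simp only [Set.mem_setOf_eq] at hx
        refine min_le_min ?_ le_rfl
        refine mul_le_mul_of_nonneg_left ?_ hw
        calc t^2 ≤ |x|^2 := pow_le_pow_left₀ ht hx 2
          _ = x^2 := sq_abs x
    _ ≤ ∫ x, min (w * x^2) 1 ∂G :=
        setIntegral_le_integral hφint (ae_of_all _ hφ0)

/-- Global irregularity: if `γ_n` are independent Gaussians with means `μ_n` and standard
deviations `σ_n`, and either (a) `max(|μ_n|, σ_n) ≥ c(1+n)^q` on a positive upper-density set
of `n`, or (b) `∑ (1+n)^{−2q−1} μ_n² = ∞`, then almost surely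
`∑ (1+n)^{−2q−1} γ_n(ω)² = ∞`, i.e. `(γ_n(ω))` is not in `h^{−q−1/2}(ℕ)`. -/

theorem gaussian_noise_global_irregularity
    {Ω : Type*} [MeasurableSpace Ω] (P : Measure Ω) [IsProbabilityMeasure P]
    (γ : ℕ → Ω → ℝ) (hmeas : ∀ n, Measurable (γ n))
    (hindep : iIndepFun γ P)
    (μ : ℕ → ℝ) (σ : ℕ → ℝ≥0)
    (hlaw : ∀ n, Measure.map (γ n) P = gaussianReal (μ n) (σ n ^ 2))
    (q : ℝ)
    (hyp :
      (∃ c > (0 : ℝ), 0 < Filter.limsup (fun N : ℕ =>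
          (Nat.card {n : ℕ | n ≤ N ∧ c * ((1 : ℝ) + n) ^ q ≤ max |μ n| (σ n : ℝ)} : ℝ) / N)
          atTop)
      ∨ ¬ Summable (fun n : ℕ => ((1 : ℝ) + n) ^ (-2 * q - 1) * μ n ^ 2)) :
    ∀ᵐ ω ∂P, ¬ Summable (fun n : ℕ => ((1 : ℝ) + n) ^ (-2 * q - 1) * γ n ω ^ 2) := by
  classical
  set w : ℕ → ℝ := fun n => ((1:ℝ)+n)^(-2*q-1) with hw
  have h1n : ∀ n : ℕ, (0:ℝ) < 1 + n := fun n => by positivity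
  have hwpos : ∀ n, 0 < w n := fun n => Real.rpow_pos_of_pos (h1n n) _
  set φ : ℕ → ℝ → ℝ := fun n x => min (w n * x^2) 1 with hφ
  have hφmeas : ∀ n, Measurable (φ n) := fun n =>
    ((measurable_id.pow_const 2).const_mul (w n)).min measurable_const
  set Z : ℕ → Ω → ℝ := fun n ω => φ n (γ n ω) with hZdef
  have hZmeas : ∀ n, Measurable (Z n) := fun n => (hφmeas n).comp (hmeas n)
  have hZindep : iIndepFun Z P := hindep.comp φ hφmeas
  have hZ0 : ∀ n ω, 0 ≤ Z n ω := fun n ω =>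
    le_min (mul_nonneg (hwpos n).le (sq_nonneg _)) zero_le_one
  have hZ1 : ∀ n ω, Z n ω ≤ 1 := fun n ω => min_le_right _ _
  set E : ℕ → ℝ := fun n => ∫ ω, Z n ω ∂P with hE
  have hEeq : ∀ n, E n = ∫ x, φ n x ∂(gaussianReal (μ n) (σ n ^ 2)) := by
    intro n
    rw [← hlaw n, integral_map (hmeas n).aemeasurable (hφmeas n).aestronglyMeasurable]
  have hE0 : ∀ n, 0 ≤ E n := fun n => integral_nonneg (fun ω => hZ0 n ω)
  have hdiv : ¬ Summable E := by
    rcases hyp with ⟨c, hc, hlim⟩ | hbdiv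
    · -- case (a)
      intro hsum
      set pmin : ℝ := min ((gaussianReal 0 1 (Set.Ici (2:ℝ))).toReal) (1/2) with hpmin
      have hpminpos : 0 < pmin := lt_min gaussian_tail_pos (by norm_num)
      set r : ℝ := min (c^2) 1 * pmin with hr
      have hrpos : 0 < r := mul_pos (lt_min (by positivity) one_pos) hpminpos
      have hkey : ∀ n : ℕ, (c * ((1:ℝ)+n)^q ≤ max |μ n| (σ n : ℝ)) →
          r * (1/(1+(n:ℝ))) ≤ E n := by
        intro n hcond
        have hm0 : (0:ℝ) ≤ max |μ n| (σ n : ℝ) :=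
          le_trans (abs_nonneg _) (le_max_left _ _)
        have ht0 : (0:ℝ) ≤ c * ((1:ℝ)+n)^q := by positivity
        have hIb := integral_min_bound (gaussianReal (μ n) (σ n ^2)) (hwpos n).le hm0
        have hgb := gaussian_max_bound (μ n) (σ n)
        have hA : (((1:ℝ)+n)^q)^(2:ℕ) = ((1:ℝ)+n)^(q*2) := by
          rw [← Real.rpow_natCast (((1:ℝ)+n)^q) 2, ← Real.rpow_mul (h1n n).le]
          norm_num
        have hwA : w n * ((1:ℝ)+n)^(q*2) = 1/(1+(n:ℝ)) := by
          rw [hw]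
          dsimp only
          rw [← Real.rpow_add (h1n n), show (-2*q-1) + q*2 = -1 by ring,
            Real.rpow_neg_one, one_div]
        have hcomp : w n * (c * ((1:ℝ)+n)^q)^2 = c^2 * (1/(1+(n:ℝ))) := by
          calc w n * (c * ((1:ℝ)+n)^q)^2
              = c^2 * (w n * ((1:ℝ)+n)^(q*2)) := by rw [mul_pow, hA]; ring
            _ = c^2 * (1/(1+(n:ℝ))) := by rw [hwA]
        have hwt_le : w n * (c * ((1:ℝ)+n)^q)^2
            ≤ w n * (max |μ n| (σ n : ℝ))^2 :=
          mul_le_mul_of_nonneg_left (pow_le_pow_left₀ ht0 hcond 2) (hwpos n).le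
        have hinv1 : (1:ℝ)/(1+(n:ℝ)) ≤ 1 := by
          rw [div_le_one (h1n n)]
          linarith [h1n n]
        have hchain : min (c^2) 1 * (1/(1+(n:ℝ)))
            ≤ min (w n * (max |μ n| (σ n : ℝ))^2) 1 := by
          refine le_min ?_ ?_
          · calc min (c^2) 1 * (1/(1+(n:ℝ))) ≤ c^2 * (1/(1+(n:ℝ))) :=
                mul_le_mul_of_nonneg_right (min_le_left _ _) (by positivity)
              _ = w n * (c * ((1:ℝ)+n)^q)^2 := hcomp.symm
              _ ≤ w n * (max |μ n| (σ n : ℝ))^2 := hwt_le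
          · have h11 : min (c^2) 1 * (1/(1+(n:ℝ))) ≤ 1 * 1 :=
              mul_le_mul (min_le_right _ _) hinv1 (by positivity) zero_le_one
            linarith
        have hEn : min (c^2) 1 * (1/(1+(n:ℝ))) * pmin ≤ E n := by
          rw [hEeq n]
          refine le_trans ?_ hIb
          refine mul_le_mul hchain hgb hpminpos.le ?_
          exact le_min (mul_nonneg (hwpos n).le (sq_nonneg _)) zero_le_one
        calc r * (1/(1+(n:ℝ))) = min (c^2) 1 * (1/(1+(n:ℝ))) * pmin := by
              rw [hr]; ring
          _ ≤ E n := hEn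
      have hlimsup := limsup_density_zero_of_summable
        (cond := fun n => c * ((1:ℝ)+n)^q ≤ max |μ n| (σ n : ℝ))
        (b := fun n => E n / r)
        (fun n => div_nonneg (hE0 n) hrpos.le)
        (fun n hcond => by
          rw [le_div_iff₀ hrpos]
          calc (1:ℝ)/(1+n) * r = r * (1/(1+(n:ℝ))) := by ring
            _ ≤ E n := hkey n hcond)
        (hsum.div_const r)
      exact absurd hlimsup (not_le.mpr hlim)
    · -- case (b)
      intro hsum
      have hbound : ∀ n, min (w n * μ n^2) 1 * (1/2) ≤ E n := by
        intro n
        have hIb := integral_min_bound (gaussianReal (μ n) (σ n^2)) (hwpos n).le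
          (abs_nonneg (μ n))
        rw [sq_abs] at hIb
        have hhalf := gaussian_abs_half (μ n) (σ n^2)
        rw [hEeq n]
        refine le_trans ?_ hIb
        exact mul_le_mul_of_nonneg_left hhalf
          (le_min (mul_nonneg (hwpos n).le (sq_nonneg _)) zero_le_one)
      have hminsum : Summable (fun n => min (w n * μ n^2) 1) := by
        refine Summable.of_nonneg_of_le
          (fun n => le_min (mul_nonneg (hwpos n).le (sq_nonneg _)) zero_le_one)
          (fun n => ?_) (hsum.mul_left 2)
        have := hbound n
        linarith
      have htend := hminsum.tendsto_atTop_zero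
      have hev : ∀ᶠ n in atTop, min (w n * μ n^2) 1 = w n * μ n^2 := by
        filter_upwards [htend.eventually
          (eventually_le_nhds (show (0:ℝ) < 1/2 by norm_num))] with n hn
        rcases le_or_gt (w n * μ n^2) 1 with h | h
        · exact min_eq_left h
        · exfalso
          rw [min_eq_right h.le] at hn
          linarith
      obtain ⟨N₀, hN₀⟩ := eventually_atTop.mp hev
      refine hbdiv ?_
      rw [← summable_nat_add_iff N₀]
      have heq : (fun n => w (n+N₀) * μ (n+N₀)^2)
          = fun n => min (w (n+N₀) * μ (n+N₀)^2) 1 := by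
        funext n
        exact (hN₀ (n+N₀) (by omega)).symm
      show Summable (fun n => w (n+N₀) * μ (n+N₀)^2)
      rw [heq]
      exact (summable_nat_add_iff N₀).mpr hminsum
  have hae := core_divergence P Z hZmeas hZindep hZ0 hZ1 hdiv
  filter_upwards [hae] with ω hω hsum
  exact hω (Summable.of_nonneg_of_le (fun n => hZ0 n ω)
    (fun n => min_le_left _ _) hsum)
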